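/- Over the alphabet Σ = {a, b, $, %}, let L₁ = ba⁺ba⁺$ and L₂ = ba⁺ba⁺%$. Then (L₁ ←max-sdi L₂) ∩ (ba⁺)³%$ = { b a^m b a^n b a^k %$ : m, n, k ≥ 1 and (m ≠ n or k < n) }. -/

import Mathlib

/-- Site-directed insertion (SDI) of string `y` into string `x`. -/
def sdiStr {α : Type} (x y : List α) : Set (List α) :=
  { w | ∃ x₁ u z v x₂ : List α,
      x = x₁ ++ u ++ v ++ x₂ ∧ y = u ++ z ++ v ∧ u ≠ [] ∧ v ≠ [] ∧
      w = x₁ ++ u ++ z ++ v ++ x₂ }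

/-- Site-directed insertion extended to languages. -/
def sdiLang {α : Type} (L₁ L₂ : Set (List α)) : Set (List α) :=
  { w | ∃ x ∈ L₁, ∃ y ∈ L₂, w ∈ sdiStr x y }

/-- Alphabetic site-directed insertion of string `y` into string `x`. -/
def asdiStr {α : Type} (x y : List α) : Set (List α) :=
  { w | ∃ (x₁ x₂ z : List α) (a b : α),
      x = x₁ ++ [a] ++ [b] ++ x₂ ∧ y = [a] ++ z ++ [b] ∧
      w = x₁ ++ [a] ++ z ++ [b] ++ x₂ }

/-- Alphabetic site-directed insertion extended to languages. -/
def asdiLang {α : Type} (L₁ L₂ : Set (List α)) : Set (List α) :=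
  { w | ∃ x ∈ L₁, ∃ y ∈ L₂, w ∈ asdiStr x y }

/-- Maximal site-directed insertion of string `y` into string `x`. -/
def maxSdiStr {α : Type} (x y : List α) : Set (List α) :=
  { w | ∃ x₁ u z v x₂ : List α,
      x = x₁ ++ u ++ v ++ x₂ ∧ y = u ++ z ++ v ∧ u ≠ [] ∧ v ≠ [] ∧
      w = x₁ ++ u ++ z ++ v ++ x₂ ∧
      ¬ ∃ x₁' x₂' z' : List α, x₁' <:+ x₁ ∧ x₂' <+: x₂ ∧
          x₁' ++ x₂' ≠ [] ∧ y = x₁' ++ u ++ z' ++ v ++ x₂' }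

/-- Maximal site-directed insertion extended to languages. -/
def maxSdiLang {α : Type} (L₁ L₂ : Set (List α)) : Set (List α) :=
  { w | ∃ x ∈ L₁, ∃ y ∈ L₂, w ∈ maxSdiStr x y }

/-- Minimal site-directed insertion of string `y` into string `x`:
the words `u` and `v` of the matched outfix must be unbordered. -/
def minSdiStr {α : Type} (x y : List α) : Set (List α) :=
  { w | ∃ x₁ u z v x₂ : List α,
      x = x₁ ++ u ++ v ++ x₂ ∧ y = u ++ z ++ v ∧ u ≠ [] ∧ v ≠ [] ∧
      w = x₁ ++ u ++ z ++ v ++ x₂ ∧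
      (∀ s : List α, s <:+ u → s ≠ [] → s ≠ u → ¬ s <+: u) ∧
      (∀ p : List α, p <+: v → p ≠ [] → p ≠ v → ¬ p <:+ v) }

/-- Minimal site-directed insertion extended to languages. -/
def minSdiLang {α : Type} (L₁ L₂ : Set (List α)) : Set (List α) :=
  { w | ∃ x ∈ L₁, ∃ y ∈ L₂, w ∈ minSdiStr x y }

/-- The four-letter alphabet Σ = {a, b, $, %}. -/
inductive Sym4 : Type
  | a : Sym4
  | b : Sym4
  | dollar : Sym4
  | percent : Sym4
  deriving DecidableEq

instance : Fintype Sym4 :=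
  ⟨{Sym4.a, Sym4.b, Sym4.dollar, Sym4.percent}, fun x => by cases x <;> simp⟩

section Helpers
open Sym4
lemma rep_decomp {j n : ℕ} {c : Sym4} {s t : List Sym4} (hc : c ≠ a)
    (h : List.replicate j a ++ s = List.replicate n a ++ c :: t) :
    j ≤ n ∧ s = List.replicate (n - j) a ++ c :: t := by
  induction j generalizing n with
  | zero => simpa using h
  | succ j ih =>
    cases n with
    | zero =>
      rw [List.replicate_succ] at h
      simp at h
      exact absurd h.1.symm hc
    | succ n =>
      rw [List.replicate_succ, List.replicate_succ] at h
      simp only [List.cons_append, List.cons.injEq] at h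
      obtain ⟨h1, h2⟩ := ih h.2
      exact ⟨Nat.succ_le_succ h1, by simpa [Nat.succ_sub_succ] using h2⟩

lemma rep_cons_eq {j n : ℕ} {c d : Sym4} {s t : List Sym4} (hc : c ≠ a) (hd : d ≠ a)
    (h : List.replicate j a ++ c :: s = List.replicate n a ++ d :: t) :
    j = n ∧ c = d ∧ s = t := by
  obtain ⟨h1, h2⟩ := rep_decomp hd h
  obtain ⟨h1', _⟩ := rep_decomp hc h.symm
  have hjn : j = n := le_antisymm h1 h1'
  subst hjn
  simp [Nat.sub_self] at h2
  exact ⟨rfl, h2.1, h2.2⟩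

lemma suffix_rep {u' : List Sym4} {m j : ℕ}
    (h : b :: u' <:+ List.replicate m a ++ b :: List.replicate j a) :
    u' = List.replicate j a := by
  induction m with
  | zero =>
    simp at h
    rcases List.suffix_cons_iff.mp h with h | h
    · injection h
    · exact absurd (List.eq_of_mem_replicate (h.subset List.mem_cons_self)) (by simp)
  | succ m ih =>
    rw [List.replicate_succ, List.cons_append] at h
    rcases List.suffix_cons_iff.mp h with h | h
    · exact absurd (List.head_eq_of_cons_eq h) (by simp)
    · exact ih h

end Helpers

open Sym4 in
/-- With `L₁ = ba⁺ba⁺$` and `L₂ = ba⁺ba⁺%$`,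
`(L₁ ←max-sdi L₂) ∩ (ba⁺)³%$ = { ba^m ba^n ba^k %$ : m,n,k ≥ 1, m ≠ n or k < n }`. -/
theorem maxSdi_intersection :
    maxSdiLang
        { w | ∃ i j : ℕ, 1 ≤ i ∧ 1 ≤ j ∧
            w = [b] ++ List.replicate i a ++ [b] ++ List.replicate j a ++ [dollar] }
        { w | ∃ i j : ℕ, 1 ≤ i ∧ 1 ≤ j ∧
            w = [b] ++ List.replicate i a ++ [b] ++ List.replicate j a ++ [percent, dollar] }
      ∩ { w | ∃ i j k : ℕ, 1 ≤ i ∧ 1 ≤ j ∧ 1 ≤ k ∧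
            w = [b] ++ List.replicate i a ++ [b] ++ List.replicate j a ++ [b] ++
                List.replicate k a ++ [percent, dollar] } =
    { w | ∃ m n k : ℕ, 1 ≤ m ∧ 1 ≤ n ∧ 1 ≤ k ∧ (m ≠ n ∨ k < n) ∧
        w = [b] ++ List.replicate m a ++ [b] ++ List.replicate n a ++ [b] ++
            List.replicate k a ++ [percent, dollar] } := by
  ext w
  simp only [Set.mem_inter_iff, Set.mem_setOf_eq, maxSdiLang, maxSdiStr]
  constructor
  · rintro ⟨⟨x, ⟨i, j, hi, hj, hx⟩, y, ⟨p, q, hp, hq, hy⟩,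
      x₁, u, zz, v, x₂, hxd, hyd, hu, hv, hw, hmax⟩, m, n, k, hm, hn, hk, hwf⟩
    refine ⟨m, n, k, hm, hn, hk, ?_, hwf⟩
    by_contra hcon
    push_neg at hcon
    obtain ⟨hmn, hkn⟩ := hcon
    -- percent does not occur in x, hence not in v ++ x₂
    have hnox : percent ∉ x := by
      rw [hx]; simp [List.mem_replicate]
    have hnovx : percent ∉ v ++ x₂ := by
      intro hmem
      apply hnox
      rw [hxd]
      simp only [List.mem_append] at hmem ⊢
      tauto
    have hsw : v ++ x₂ <:+ w := ⟨x₁ ++ u ++ zz, by rw [hw]; simp [List.append_assoc]⟩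
    have hpd : [percent, dollar] <:+ w :=
      ⟨[b] ++ List.replicate m a ++ [b] ++ List.replicate n a ++ [b] ++ List.replicate k a,
        by rw [hwf]⟩
    have hvx₂ : v ++ x₂ <:+ [percent, dollar] ∨ [percent, dollar] <:+ v ++ x₂ :=
      List.suffix_or_suffix_of_suffix hsw hpd
    have hvx : v ++ x₂ = [dollar] := by
      rcases hvx₂ with hcase | hcase
      · obtain ⟨s, hs⟩ := hcase
        rcases s with _ | ⟨c, _ | ⟨d, s⟩⟩
        · exfalso
          apply hnovx
          rw [List.nil_append] at hs
          rw [hs]; simp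
        · simp only [List.cons_append, List.nil_append, List.cons.injEq] at hs
          exact hs.2
        · exfalso
          simp only [List.cons_append, List.cons.injEq] at hs
          obtain ⟨-, -, hs⟩ := hs
          rw [List.append_eq_nil_iff] at hs
          exact hv (List.append_eq_nil_iff.mp hs.2).1
      · exact absurd (hcase.subset (by simp)) hnovx
    obtain ⟨hvd, hx₂⟩ : v = [dollar] ∧ x₂ = [] := by
      cases v with
      | nil => exact absurd rfl hv
      | cons c v' =>
        simp only [List.cons_append, List.cons.injEq] at hvx
        obtain ⟨rfl, hvx⟩ := hvx
        rw [List.append_eq_nil_iff] at hvx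
        simp [hvx.1, hvx.2]
    subst hvd hx₂
    -- cancel the trailing dollar everywhere
    have Ex : x₁ ++ u = [b] ++ List.replicate i a ++ [b] ++ List.replicate j a := by
      apply List.append_cancel_right (bs := [dollar])
      simpa [List.append_assoc] using hxd.symm.trans hx
    have Ey : u ++ zz = [b] ++ List.replicate p a ++ [b] ++ List.replicate q a ++ [percent] := by
      apply List.append_cancel_right (bs := [dollar])
      simpa [List.append_assoc] using hyd.symm.trans hy
    have Ew : (x₁ ++ u) ++ zz = [b] ++ List.replicate m a ++ [b] ++ List.replicate n a ++ [b]
        ++ List.replicate k a ++ [percent] := by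
      apply List.append_cancel_right (bs := [dollar])
      simpa [List.append_assoc] using hw.symm.trans hwf
    rw [Ex] at Ew
    simp only [List.append_assoc, List.cons_append, List.singleton_append, List.nil_append,
      List.cons.injEq, true_and] at Ew
    obtain ⟨him, -, E2⟩ := rep_cons_eq (by simp) (by simp) Ew
    obtain ⟨hjn, hz⟩ := rep_decomp (by simp) E2
    cases u with
    | nil => exact hu rfl
    | cons c u' =>
      simp only [List.append_assoc, List.cons_append, List.singleton_append, List.nil_append,
        List.cons.injEq] at Ey
      obtain ⟨rfl, Ey'⟩ := Ey
      have hsuf0 : b :: u' <:+ b :: (List.replicate i a ++ b :: List.replicate j a) :=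
        ⟨x₁, by simpa [List.append_assoc] using Ex⟩
      rcases List.suffix_cons_iff.mp hsuf0 with hcase2 | hcase2
      · -- u is the whole of x : impossible, b-count mismatch
        injection hcase2 with _ hu'
        rw [hu', hz] at Ey'
        simp only [List.cons_append, List.append_assoc] at Ey'
        obtain ⟨-, -, E3⟩ := rep_cons_eq (by simp) (by simp) Ey'
        rw [← List.append_assoc, ← List.replicate_add,
          (by omega : j + (n - j) = n)] at E3
        obtain ⟨-, hbp, -⟩ := rep_cons_eq (by simp) (by simp) E3
        exact absurd hbp (by simp)
      · have hu' : u' = List.replicate j a := suffix_rep hcase2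
        subst hu'
        have hx₁ : x₁ = b :: List.replicate i a := by
          apply List.append_cancel_right (bs := b :: List.replicate j a)
          simpa [List.append_assoc] using Ex
        rw [hz, ← List.append_assoc, ← List.replicate_add,
          (by omega : j + (n - j) = n)] at Ey'
        obtain ⟨hnp, -, E3⟩ := rep_cons_eq (by simp) (by simp) Ey'
        obtain ⟨hkq, -, -⟩ := rep_cons_eq (by simp) (by simp) E3
        apply hmax
        refine ⟨b :: List.replicate i a, [], List.replicate (k - j) a ++ [percent],
          by rw [hx₁], List.nil_prefix, by simp, ?_⟩
        rw [hy]
        have hrepq : List.replicate q a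
            = List.replicate j a ++ List.replicate (k - j) a := by
          rw [← List.replicate_add]; congr 1; omega
        rw [hrepq]
        simp only [him, hmn, ← hnp, List.append_assoc, List.cons_append, List.singleton_append,
          List.nil_append, List.append_nil]
  · rintro ⟨m, n, k, hm, hn, hk, hcond, hwf⟩
    set t : ℕ := if k < n then n else 1 with ht
    have ht1 : 1 ≤ t := by rw [ht]; split <;> omega
    have htn : t ≤ n := by rw [ht]; split <;> omega
    have hrep : List.replicate n a = List.replicate t a ++ List.replicate (n - t) a := by
      rw [← List.replicate_add]; congr 1; omega
    refine ⟨⟨_, ⟨m, t, hm, ht1, rfl⟩, _, ⟨n, k, hn, hk, rfl⟩,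
      b :: List.replicate m a, b :: List.replicate t a,
      List.replicate (n - t) a ++ b :: (List.replicate k a ++ [percent]),
      [dollar], [], by simp, ?_, by simp, by simp, ?_, ?_⟩, ⟨m, n, k, hm, hn, hk, hwf⟩⟩
    · simp [hrep, List.append_assoc]; rw [List.replicate_add, List.append_assoc]
    · rw [hwf]; simp [hrep, List.append_assoc]; rw [List.replicate_add, List.append_assoc]
    · rintro ⟨x₁', x₂', z', hs, hp, hne, heq⟩
      rw [List.prefix_nil] at hp
      subst hp
      rcases List.suffix_cons_iff.mp hs with h | h
      · subst h
        simp only [List.append_assoc, List.cons_append, List.singleton_append,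
          List.nil_append, List.append_nil, List.cons.injEq, true_and] at heq
        obtain ⟨hnm, heq2⟩ := rep_cons_eq (by simp) (by simp) heq
        rcases hcond with hmn | hkn
        · exact hmn hnm.symm
        · have htval : t = n := by rw [ht, if_pos hkn]
          obtain ⟨hle, -⟩ := rep_decomp (c := percent) (by simp) heq2.2.symm
          omega
      · cases x₁' with
        | nil => simp at hne
        | cons c tl =>
          have hca : c = a := List.eq_of_mem_replicate (h.subset List.mem_cons_self)
          simp only [hca, List.append_assoc, List.cons_append, List.singleton_append,
            List.cons.injEq] at heq
          exact absurd heq.1 (by simp)
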